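/- (Theorem 5.2.) Fix a collection of itemsets C, a dataset D, and let p*_C be a maximum-entropy distribution consistent with D for C that has exponential form over C with strictly positive parameters. Let X be an itemset and let p*_{C∪{X}} be a maximum-entropy distribution consistent with D for C ∪ {X}. Then 0 ≤ kl(fr(X|D), p*_C(X = 1)) ≤ KL(p*_{C∪{X}} ‖ p*_C). Moreover, kl(fr(X|D), p*_C(X = 1)) = 0 if and only if KL(p*_{C∪{X}} ‖ p*_C) = 0, which holds if and only if fr(X|D) = p*_C(X = 1). -/

import Mathlib

open scoped BigOperators

/-- A transaction over `N` items: an element of `{0,1}^N`. -/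
abbrev Transaction (N : ℕ) := Fin N → Bool

/-- A transaction `t` supports an itemset `X` iff `t i = 1` for all `i ∈ X`. -/
def supports {N : ℕ} (X : Finset (Fin N)) (t : Transaction N) : Prop :=
  ∀ i ∈ X, t i = true

instance {N : ℕ} (X : Finset (Fin N)) (t : Transaction N) : Decidable (supports X t) :=
  inferInstanceAs (Decidable (∀ i ∈ X, t i = true))

/-- A distribution on `{0,1}^N`: values in `[0,1]` summing to one. -/
def IsDistr {N : ℕ} (p : Transaction N → ℝ) : Prop :=
  (∀ t, 0 ≤ p t ∧ p t ≤ 1) ∧ ∑ t, p t = 1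

/-- `p(X = 1)`: the probability that a transaction supports `X`. -/
def probOne {N : ℕ} (p : Transaction N → ℝ) (X : Finset (Fin N)) : ℝ :=
  ∑ t, if supports X t then p t else 0

/-- Binary entropy `H(p) = -∑ p(t) log₂ p(t)` (with `0·log₂ 0 = 0`, as `Real.logb 2 0 = 0`). -/
noncomputable def entropy {N : ℕ} (p : Transaction N → ℝ) : ℝ :=
  - ∑ t, p t * Real.logb 2 (p t)

/-- Frequency of an itemset in a dataset (a multiset of transactions). -/
noncomputable def freq {N : ℕ} (X : Finset (Fin N)) (D : Multiset (Transaction N)) : ℝ :=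
  (D.countP (fun t => supports X t) : ℝ) / (Multiset.card D : ℝ)

/-- Likelihood of a dataset: `p(D) = ∏_{t ∈ D} p(t)`. -/
noncomputable def lhd {N : ℕ} (p : Transaction N → ℝ) (D : Multiset (Transaction N)) : ℝ :=
  (D.map p).prod

/-- `p` has exponential form over the collection `C` of itemsets. -/
def ExpForm {N : ℕ} (C : Finset (Finset (Fin N))) (p : Transaction N → ℝ) : Prop :=
  ∃ u0 : ℝ, ∃ u : Finset (Fin N) → ℝ, 0 < u0 ∧ (∀ X ∈ C, 0 < u X) ∧
    ∀ t, p t = u0 * ∏ X ∈ C, if supports X t then u X else 1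

/-- Kullback–Leibler divergence (base 2). -/
noncomputable def KLdiv {N : ℕ} (p q : Transaction N → ℝ) : ℝ :=
  ∑ t, p t * Real.logb 2 (p t / q t)

/-- Binary KL divergence `kl(x,y)` between Bernoulli parameters. -/
noncomputable def klPair (x y : ℝ) : ℝ :=
  x * Real.logb 2 (x / y) + (1 - x) * Real.logb 2 ((1 - x) / (1 - y))

section AuxLemmas

open Finset

private lemma two_ne_one' : (2:ℝ) ≠ 1 := by norm_num

/-- Termwise log-sum bound. -/
private lemma term_bound {q p a b : ℝ} (hq : 0 ≤ q) (hp : 0 < p) (hqa : q ≤ a) (hb : 0 < b) :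
    q * Real.log (a / b) + q - a * p / b ≤ q * Real.log (q / p) := by
  rcases eq_or_lt_of_le hq with h | h
  · have ha : 0 ≤ a := le_trans hq hqa
    rw [← h]
    have : 0 ≤ a * p / b := by positivity
    simp only [zero_mul, add_zero, zero_add, zero_sub, mul_zero]
    linarith
  · have ha : 0 < a := lt_of_lt_of_le h hqa
    have key := Real.log_le_sub_one_of_pos (show 0 < (a * p) / (q * b) by positivity)
    have hlog : Real.log ((a * p) / (q * b)) = Real.log (a / b) - Real.log (q / p) := by
      rw [Real.log_div (by positivity) (by positivity),
        Real.log_div (ne_of_gt ha) (ne_of_gt hb),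
        Real.log_div (ne_of_gt h) (ne_of_gt hp),
        Real.log_mul (ne_of_gt ha) (ne_of_gt hp),
        Real.log_mul (ne_of_gt h) (ne_of_gt hb)]
      ring
    rw [hlog] at key
    have hmul := mul_le_mul_of_nonneg_left key (le_of_lt h)
    have hqb : q * ((a * p) / (q * b) - 1) = a * p / b - q := by
      field_simp
    rw [hqb] at hmul
    linarith [hmul]

/-- Log-sum inequality over a finite set (natural log version). -/
private lemma log_sum {α : Type*} (s : Finset α) (q p : α → ℝ)
    (hq : ∀ t ∈ s, 0 ≤ q t) (hp : ∀ t ∈ s, 0 < p t) (hb : 0 < ∑ t ∈ s, p t) :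
    (∑ t ∈ s, q t) * Real.log ((∑ t ∈ s, q t) / (∑ t ∈ s, p t)) ≤
      ∑ t ∈ s, q t * Real.log (q t / p t) := by
  set a := ∑ t ∈ s, q t with hadef
  set b := ∑ t ∈ s, p t with hbdef
  have ha : ∀ t ∈ s, q t ≤ a := fun t ht => Finset.single_le_sum hq ht
  have h1 : ∑ t ∈ s, (q t * Real.log (a / b) + q t - a * p t / b) ≤
      ∑ t ∈ s, q t * Real.log (q t / p t) :=
    Finset.sum_le_sum fun t ht => term_bound (hq t ht) (hp t ht) (ha t ht) hb
  have h2 : ∑ t ∈ s, (q t * Real.log (a / b) + q t - a * p t / b)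
      = a * Real.log (a / b) + a - a * b / b := by
    rw [Finset.sum_sub_distrib, Finset.sum_add_distrib, ← Finset.sum_mul]
    congr 1
    rw [← Finset.sum_div, ← Finset.mul_sum]
  have hbne : b ≠ 0 := ne_of_gt hb
  rw [h2, mul_div_assoc, div_self hbne, mul_one] at h1
  linarith

/-- Log-sum inequality, base-2 version. -/
private lemma logb_sum {α : Type*} (s : Finset α) (q p : α → ℝ)
    (hq : ∀ t ∈ s, 0 ≤ q t) (hp : ∀ t ∈ s, 0 < p t) (hb : 0 < ∑ t ∈ s, p t) :
    (∑ t ∈ s, q t) * Real.logb 2 ((∑ t ∈ s, q t) / (∑ t ∈ s, p t)) ≤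
      ∑ t ∈ s, q t * Real.logb 2 (q t / p t) := by
  have h := log_sum s q p hq hp hb
  have hl2 : (0:ℝ) < Real.log 2 := Real.log_pos (by norm_num)
  simp only [Real.logb]
  rw [show (∑ t ∈ s, q t) * (Real.log ((∑ t ∈ s, q t) / (∑ t ∈ s, p t)) / Real.log 2)
      = ((∑ t ∈ s, q t) * Real.log ((∑ t ∈ s, q t) / (∑ t ∈ s, p t))) / Real.log 2 by ring,
    show (∑ t ∈ s, q t * (Real.log (q t / p t) / Real.log 2))
      = (∑ t ∈ s, q t * Real.log (q t / p t)) / Real.log 2 by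
        rw [Finset.sum_div]; apply Finset.sum_congr rfl; intro t _; ring]
  exact div_le_div_of_nonneg_right h hl2.le

/-- Strict positivity of the binary KL divergence (natural log). -/
private lemma kl2_pos {x y : ℝ} (hx0 : 0 ≤ x) (hx1 : x ≤ 1) (hy0 : 0 < y) (hy1 : y < 1)
    (hxy : x ≠ y) :
    0 < x * Real.log (x / y) + (1 - x) * Real.log ((1 - x) / (1 - y)) := by
  have h1y : (0:ℝ) < 1 - y := by linarith
  rcases eq_or_lt_of_le hx0 with h0 | h0
  · -- x = 0
    rw [← h0]
    simp only [zero_mul, sub_zero, zero_add, one_mul]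
    rw [Real.log_div one_ne_zero (ne_of_gt h1y), Real.log_one]
    have := Real.log_neg h1y (by linarith)
    linarith
  rcases eq_or_lt_of_le hx1 with h1 | h1
  · -- x = 1
    rw [h1]
    simp only [sub_self, zero_mul, add_zero, one_mul]
    rw [Real.log_div one_ne_zero (ne_of_gt hy0), Real.log_one]
    have := Real.log_neg hy0 hy1
    linarith
  · -- 0 < x < 1
    have h1x : (0:ℝ) < 1 - x := by linarith
    have key1 : Real.log (y / x) < y / x - 1 := by
      apply Real.log_lt_sub_one_of_pos (by positivity)
      intro h
      apply hxy
      have := (div_eq_one_iff_eq (ne_of_gt h0)).mp h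
      linarith
    have key2 : Real.log ((1 - y) / (1 - x)) < (1 - y) / (1 - x) - 1 := by
      apply Real.log_lt_sub_one_of_pos (by positivity)
      intro h
      apply hxy
      have := (div_eq_one_iff_eq (ne_of_gt h1x)).mp h
      linarith
    have e1 : Real.log (x / y) = - Real.log (y / x) := by
      rw [Real.log_div (ne_of_gt h0) (ne_of_gt hy0), Real.log_div (ne_of_gt hy0) (ne_of_gt h0)]
      ring
    have e2 : Real.log ((1 - x) / (1 - y)) = - Real.log ((1 - y) / (1 - x)) := by
      rw [Real.log_div (ne_of_gt h1x) (ne_of_gt h1y), Real.log_div (ne_of_gt h1y) (ne_of_gt h1x)]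
      ring
    rw [e1, e2]
    have m1 : x * Real.log (y / x) < y - x := by
      have := mul_lt_mul_of_pos_left key1 h0
      have hx' : x * (y / x - 1) = y - x := by field_simp
      linarith [hx' ▸ this]
    have m2 : (1 - x) * Real.log ((1 - y) / (1 - x)) < x - y := by
      have := mul_lt_mul_of_pos_left key2 h1x
      have hx' : (1 - x) * ((1 - y) / (1 - x) - 1) = x - y := by field_simp; ring
      linarith [hx' ▸ this]
    nlinarith

end AuxLemmas

/-- Theorem 5.2: the heuristic `kl` is a nonnegative lower bound on the KL
divergence between successive maximum entropy models, and vanishes exactly when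
the frequency of `X` agrees with the current model estimate. -/
theorem heuristic_bounds_KL {N : ℕ} (hN : 1 ≤ N)
    (C : Finset (Finset (Fin N)))
    (D : Multiset (Transaction N)) (hD : D ≠ 0)
    -- `p*_C` is a maximum-entropy distribution consistent with `D` for `C`,
    -- of exponential form over `C` (with strictly positive parameters):
    (pstar : Transaction N → ℝ) (hpstar : IsDistr pstar)
    (hcons : ∀ Y ∈ C, probOne pstar Y = freq Y D)
    (hmax : ∀ q : Transaction N → ℝ, IsDistr q → (∀ Y ∈ C, probOne q Y = freq Y D) →
      entropy q ≤ entropy pstar)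
    (hform : ExpForm C pstar)
    -- `p*_{C ∪ {X}}` is a maximum-entropy distribution consistent with `D` for `C ∪ {X}`:
    (X : Finset (Fin N))
    (pstar' : Transaction N → ℝ) (hpstar' : IsDistr pstar')
    (hcons' : ∀ Y ∈ insert X C, probOne pstar' Y = freq Y D)
    (hmax' : ∀ q : Transaction N → ℝ, IsDistr q →
      (∀ Y ∈ insert X C, probOne q Y = freq Y D) → entropy q ≤ entropy pstar') :
    0 ≤ klPair (freq X D) (probOne pstar X) ∧
      klPair (freq X D) (probOne pstar X) ≤ KLdiv pstar' pstar ∧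
      (klPair (freq X D) (probOne pstar X) = 0 ↔ KLdiv pstar' pstar = 0) ∧
      (KLdiv pstar' pstar = 0 ↔ freq X D = probOne pstar X) := by
  classical
  obtain ⟨hps01, hps1⟩ := hpstar
  obtain ⟨hps01', hps1'⟩ := hpstar'
  obtain ⟨u0, u, hu0, hu, hpform⟩ := hform
  -- positivity of pstar
  have hppos : ∀ t, 0 < pstar t := by
    intro t
    rw [hpform t]
    apply mul_pos hu0
    apply Finset.prod_pos
    intro Y hY
    split
    · exact hu Y hY
    · norm_num
  set f := freq X D with hfdef
  set b := probOne pstar X with hbdef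
  set A : Finset (Transaction N) := Finset.univ.filter (fun t => supports X t) with hAdef
  set B : Finset (Transaction N) := Finset.univ.filter (fun t => ¬ supports X t) with hBdef
  have hprob : ∀ p : Transaction N → ℝ, probOne p X = ∑ t ∈ A, p t := by
    intro p
    rw [probOne, hAdef, Finset.sum_filter]
  -- linearity: the cross-entropy of any consistent distribution against pstar is fixed
  have key3 : ∀ q : Transaction N → ℝ, (∑ t, q t) = 1 →
      (∀ Y ∈ C, probOne q Y = freq Y D) →
      ∑ t, q t * Real.logb 2 (pstar t)
        = Real.logb 2 u0 + ∑ Y ∈ C, freq Y D * Real.logb 2 (u Y) := by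
    intro q hq1 hqc
    have hlogp : ∀ t, Real.logb 2 (pstar t) =
        Real.logb 2 u0 + ∑ Y ∈ C, (if supports Y t then Real.logb 2 (u Y) else 0) := by
      intro t
      rw [hpform t, Real.logb_mul (ne_of_gt hu0) ?hne, Real.logb_prod]
      · congr 1
        apply Finset.sum_congr rfl
        intro Y hY
        split
        · rfl
        · exact Real.logb_one
      · intro Y hY
        split
        · exact ne_of_gt (hu Y hY)
        · norm_num
      case hne =>
        apply ne_of_gt
        apply Finset.prod_pos
        intro Y hY
        split
        · exact hu Y hY
        · norm_num
    calc ∑ t, q t * Real.logb 2 (pstar t)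
        = ∑ t, (q t * Real.logb 2 u0
            + ∑ Y ∈ C, q t * (if supports Y t then Real.logb 2 (u Y) else 0)) := by
          apply Finset.sum_congr rfl
          intro t _
          rw [hlogp t, mul_add, Finset.mul_sum]
      _ = (∑ t, q t) * Real.logb 2 u0
            + ∑ Y ∈ C, ∑ t, q t * (if supports Y t then Real.logb 2 (u Y) else 0) := by
          rw [Finset.sum_add_distrib, ← Finset.sum_mul, Finset.sum_comm]
      _ = Real.logb 2 u0 + ∑ Y ∈ C, probOne q Y * Real.logb 2 (u Y) := by
          rw [hq1, one_mul]
          congr 1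
          apply Finset.sum_congr rfl
          intro Y _
          rw [probOne, Finset.sum_mul]
          apply Finset.sum_congr rfl
          intro t _
          split <;> simp
      _ = Real.logb 2 u0 + ∑ Y ∈ C, freq Y D * Real.logb 2 (u Y) := by
          congr 1
          apply Finset.sum_congr rfl
          intro Y hY
          rw [hqc Y hY]
  have hcross : ∑ t, pstar' t * Real.logb 2 (pstar t) = ∑ t, pstar t * Real.logb 2 (pstar t) := by
    rw [key3 pstar' hps1' (fun Y hY => hcons' Y (Finset.mem_insert_of_mem hY)),
      key3 pstar hps1 hcons]
  -- KL divergence equals the entropy gap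
  have hKL : KLdiv pstar' pstar = entropy pstar - entropy pstar' := by
    have hterm : ∀ t : Transaction N, pstar' t * Real.logb 2 (pstar' t / pstar t)
        = pstar' t * Real.logb 2 (pstar' t) - pstar' t * Real.logb 2 (pstar t) := by
      intro t
      rcases eq_or_lt_of_le (hps01' t).1 with h | h
      · rw [← h]; simp
      · rw [Real.logb_div (ne_of_gt h) (ne_of_gt (hppos t)), mul_sub]
    rw [KLdiv, Finset.sum_congr rfl (fun t _ => hterm t), Finset.sum_sub_distrib, hcross,
      entropy, entropy]
    ring
  have hent : entropy pstar' ≤ entropy pstar :=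
    hmax pstar' ⟨hps01', hps1'⟩ (fun Y hY => hcons' Y (Finset.mem_insert_of_mem hY))
  have hK0 : 0 ≤ KLdiv pstar' pstar := by rw [hKL]; linarith
  -- if the frequency matches the model estimate, the KL divergence vanishes
  have hfb_K : f = b → KLdiv pstar' pstar = 0 := by
    intro hfb
    have hconsX : ∀ Y ∈ insert X C, probOne pstar Y = freq Y D := by
      intro Y hY
      rcases Finset.mem_insert.mp hY with h | h
      · rw [h, ← hbdef, ← hfb, hfdef]
      · exact hcons Y h
    have := hmax' pstar ⟨hps01, hps1⟩ hconsX
    rw [hKL]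
    linarith
  -- basic frequency facts
  have hcard : (0:ℝ) < (Multiset.card D : ℝ) := by
    exact_mod_cast Multiset.card_pos.mpr hD
  have hf0 : 0 ≤ f := by
    rw [hfdef, freq]
    positivity
  have hf1 : f ≤ 1 := by
    rw [hfdef, freq, div_le_one hcard]
    exact_mod_cast Multiset.countP_le_card _ _
  -- pstar' puts mass f on A
  have hfp' : ∑ t ∈ A, pstar' t = f := by
    rw [← hprob pstar']
    exact hcons' X (Finset.mem_insert_self X C)
  -- the all-true transaction supports X
  have hAne : (fun _ => true : Transaction N) ∈ A := by
    rw [hAdef, Finset.mem_filter]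
    exact ⟨Finset.mem_univ _, fun i _ => rfl⟩
  have hb0 : 0 < b := by
    rw [hbdef, hprob pstar]
    exact Finset.sum_pos (fun t _ => hppos t) ⟨_, hAne⟩
  have hbA : ∑ t ∈ A, pstar t = b := (hprob pstar).symm
  -- splitting total mass
  have hsplit : ∀ p : Transaction N → ℝ, (∑ t, p t) = 1 →
      ∑ t ∈ B, p t = 1 - ∑ t ∈ A, p t := by
    intro p hp1
    have := Finset.sum_filter_add_sum_filter_not Finset.univ (fun t => supports X t) p
    rw [hp1] at this
    rw [hBdef]
    rw [← hAdef] at this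
    linarith [this]
  have hb1 : b ≤ 1 := by
    rw [hbdef, hprob pstar]
    have h2 := hsplit pstar hps1
    have : 0 ≤ ∑ t ∈ B, pstar t := Finset.sum_nonneg (fun t _ => (hppos t).le)
    linarith
  rcases eq_or_lt_of_le hb1 with hbeq | hblt
  · -- degenerate case b = 1 : every transaction supports X, so f = 1 = b
    have hBzero : ∑ t ∈ B, pstar t = 0 := by
      have := hsplit pstar hps1
      rw [hbdef, hprob pstar] at hbeq
      linarith
    have hall : ∀ t : Transaction N, supports X t := by
      intro t
      by_contra hns
      have htB : t ∈ B := by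
        rw [hBdef, Finset.mem_filter]
        exact ⟨Finset.mem_univ _, hns⟩
      have := (Finset.sum_eq_zero_iff_of_nonneg (fun s _ => (hppos s).le)).mp hBzero t htB
      exact absurd this (ne_of_gt (hppos t))
    have hfone : f = 1 := by
      rw [hfdef, freq, Multiset.countP_eq_card.mpr (fun t _ => hall t), div_self (ne_of_gt hcard)]
    have hfb : f = b := by rw [hfone, hbeq]
    have hKzero : KLdiv pstar' pstar = 0 := hfb_K hfb
    have hklzero : klPair f b = 0 := by
      rw [hfone, hbeq]
      simp [klPair]
    refine ⟨by rw [hklzero], by rw [hklzero]; exact hK0, ?_, ?_⟩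
    · constructor <;> intro _ <;> [exact hKzero; exact hklzero]
    · constructor <;> intro _ <;> [exact hfb; exact hKzero]
  · -- main case: 0 < b < 1
    have h1b : 0 < 1 - b := by linarith
    -- B is where pstar has mass 1 - b
    have hbB : ∑ t ∈ B, pstar t = 1 - b := by
      rw [hsplit pstar hps1, hbA]
    have hfB : ∑ t ∈ B, pstar' t = 1 - f := by
      rw [hsplit pstar' hps1', hfp']
    -- log-sum on each part
    have hls1 := logb_sum A pstar' pstar (fun t _ => (hps01' t).1) (fun t _ => hppos t)
      (by rw [hbA]; exact hb0)
    have hls2 := logb_sum B pstar' pstar (fun t _ => (hps01' t).1) (fun t _ => hppos t)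
      (by rw [hbB]; exact h1b)
    rw [hfp', hbA] at hls1
    rw [hfB, hbB] at hls2
    have hKsplit : KLdiv pstar' pstar
        = ∑ t ∈ A, pstar' t * Real.logb 2 (pstar' t / pstar t)
          + ∑ t ∈ B, pstar' t * Real.logb 2 (pstar' t / pstar t) := by
      rw [KLdiv, hAdef, hBdef,
        ← Finset.sum_filter_add_sum_filter_not Finset.univ (fun t => supports X t)]
    have hmain : klPair f b ≤ KLdiv pstar' pstar := by
      rw [hKsplit, klPair]
      exact add_le_add hls1 hls2
    -- positivity / equality analysis for klPair
    have hl2 : (0:ℝ) < Real.log 2 := Real.log_pos (by norm_num)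
    have hkl_eq : klPair f b
        = (f * Real.log (f / b) + (1 - f) * Real.log ((1 - f) / (1 - b))) / Real.log 2 := by
      rw [klPair]
      simp only [Real.logb]
      ring
    have hne_pos : f ≠ b → 0 < klPair f b := by
      intro hfb
      rw [hkl_eq]
      exact div_pos (kl2_pos hf0 hf1 hb0 hblt hfb) hl2
    have hkl0 : 0 ≤ klPair f b := by
      rcases eq_or_ne f b with h | h
      · rw [h, klPair]
        have hb1' : (1:ℝ) - b ≠ 0 := ne_of_gt h1b
        rw [div_self (ne_of_gt hb0), div_self hb1']
        simp
      · exact (hne_pos h).le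
    have hkl_imp : klPair f b = 0 → f = b := by
      intro h
      by_contra hfb
      exact absurd h (ne_of_gt (hne_pos hfb))
    refine ⟨hkl0, hmain, ?_, ?_⟩
    · constructor
      · intro h
        exact hfb_K (hkl_imp h)
      · intro h
        have := hmain
        rw [h] at this
        linarith
    · constructor
      · intro h
        apply hkl_imp
        have h2 := hmain
        rw [h] at h2
        linarith
      · exact hfb_K
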